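/- arXiv:1207.3619 — 4 statements merged into one kernel-verified Lean document; each statement's English description precedes it below -/
import Mathlib

section
/- For every integer N ≥ 1, the Hausdorff dimension of the metric space (ℝ^N × ℝ, d), where d is the parabolic metric, equals N + 2. -/
open scoped ENNReal

noncomputable section

/-- Spacetime `ℝ^N × ℝ` equipped with the parabolic metric
`d((x,t),(y,s)) = max (‖x-y‖, |t-s|^{1/2})`. -/
def ParSpace (N : ℕ) : Type := EuclideanSpace ℝ (Fin N) × ℝ

namespace ParSpace

variable {N : ℕ}

theorem sqrt_subadd (a b : ℝ) (ha : 0 ≤ a) (hb : 0 ≤ b) :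
    Real.sqrt (a + b) ≤ Real.sqrt a + Real.sqrt b := by
  have h1 := Real.sq_sqrt ha
  have h2 := Real.sq_sqrt hb
  have h3 := Real.sqrt_nonneg a
  have h4 := Real.sqrt_nonneg b
  rw [show a + b = (Real.sqrt a)^2 + (Real.sqrt b)^2 by rw [h1, h2]]
  have h : (Real.sqrt a)^2 + (Real.sqrt b)^2 ≤ (Real.sqrt a + Real.sqrt b)^2 := by nlinarith
  calc Real.sqrt ((Real.sqrt a)^2 + (Real.sqrt b)^2)
      ≤ Real.sqrt ((Real.sqrt a + Real.sqrt b)^2) := Real.sqrt_le_sqrt h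
    _ = Real.sqrt a + Real.sqrt b := Real.sqrt_sq (by positivity)

instance : MetricSpace (ParSpace N) where
  dist X Y := max ‖X.1 - Y.1‖ (Real.sqrt |X.2 - Y.2|)
  dist_self X := by
    show max ‖X.1 - X.1‖ (Real.sqrt |X.2 - X.2|) = 0
    simp
  dist_comm X Y := by
    show max ‖X.1 - Y.1‖ (Real.sqrt |X.2 - Y.2|) = max ‖Y.1 - X.1‖ (Real.sqrt |Y.2 - X.2|)
    rw [norm_sub_rev, abs_sub_comm]
  dist_triangle X Y Z := by
    show max ‖X.1 - Z.1‖ (Real.sqrt |X.2 - Z.2|) ≤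
      max ‖X.1 - Y.1‖ (Real.sqrt |X.2 - Y.2|) + max ‖Y.1 - Z.1‖ (Real.sqrt |Y.2 - Z.2|)
    apply max_le
    · calc ‖X.1 - Z.1‖ ≤ ‖X.1 - Y.1‖ + ‖Y.1 - Z.1‖ := norm_sub_le_norm_sub_add_norm_sub _ _ _
        _ ≤ _ := add_le_add (le_max_left _ _) (le_max_left _ _)
    · calc Real.sqrt |X.2 - Z.2|
          ≤ Real.sqrt (|X.2 - Y.2| + |Y.2 - Z.2|) :=
            Real.sqrt_le_sqrt (abs_sub_le _ _ _)
        _ ≤ Real.sqrt |X.2 - Y.2| + Real.sqrt |Y.2 - Z.2| :=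
            sqrt_subadd _ _ (abs_nonneg _) (abs_nonneg _)
        _ ≤ _ := add_le_add (le_max_right _ _) (le_max_right _ _)
  eq_of_dist_eq_zero := by
    intro X Y h
    have h' : max ‖X.1 - Y.1‖ (Real.sqrt |X.2 - Y.2|) = 0 := h
    have h1 : ‖X.1 - Y.1‖ = 0 := le_antisymm (h' ▸ le_max_left _ _) (norm_nonneg _)
    have h2 : Real.sqrt |X.2 - Y.2| = 0 :=
      le_antisymm (h' ▸ le_max_right _ _) (Real.sqrt_nonneg _)
    have hx : X.1 = Y.1 := sub_eq_zero.mp (norm_eq_zero.mp h1)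
    have ht : X.2 = Y.2 := by
      have := (Real.sqrt_eq_zero (abs_nonneg _)).mp h2
      exact sub_eq_zero.mp (abs_eq_zero.mp this)
    exact Prod.ext hx ht

instance : MeasurableSpace (ParSpace N) := borel _
instance : BorelSpace (ParSpace N) := ⟨rfl⟩

/-- The spacetime origin. -/
def origin (N : ℕ) : ParSpace N := ((0 : EuclideanSpace ℝ (Fin N)), (0 : ℝ))

end ParSpace
end

open MeasureTheory

namespace ParSpaceAux
noncomputable section Aux
variable {N : ℕ}

lemma parDist_def (X Y : ParSpace N) :
    dist X Y = max ‖X.1 - Y.1‖ (Real.sqrt |X.2 - Y.2|) := rfl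

/-- identity from the standard product space to ParSpace -/
def toPar (p : EuclideanSpace ℝ (Fin N) × ℝ) : ParSpace N := p

/-- identity from ParSpace to the standard product space -/
def ofPar (p : ParSpace N) : EuclideanSpace ℝ (Fin N) × ℝ := p

lemma continuous_toPar : Continuous (toPar (N := N)) := by
  rw [Metric.continuous_iff]
  intro b ε hε
  refine ⟨min ε (ε ^ 2), by positivity, fun a ha => ?_⟩
  rw [Prod.dist_eq] at ha
  have h1 : dist a.1 b.1 < ε := lt_of_le_of_lt (le_max_left _ _) (lt_of_lt_of_le ha (min_le_left _ _))
  have h2 : dist a.2 b.2 < ε ^ 2 := lt_of_le_of_lt (le_max_right _ _) (lt_of_lt_of_le ha (min_le_right _ _))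
  show max ‖a.1 - b.1‖ (Real.sqrt |a.2 - b.2|) < ε
  apply max_lt
  · simpa [dist_eq_norm] using h1
  · have : |a.2 - b.2| < ε ^ 2 := by simpa [Real.dist_eq] using h2
    calc Real.sqrt |a.2 - b.2| < Real.sqrt (ε ^ 2) := by
          exact Real.sqrt_lt_sqrt (abs_nonneg _) this
      _ = ε := Real.sqrt_sq hε.le

lemma continuous_ofPar : Continuous (ofPar (N := N)) := by
  rw [Metric.continuous_iff]
  intro b ε hε
  refine ⟨min ε (Real.sqrt ε), by positivity, fun a ha => ?_⟩
  rw [parDist_def] at ha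
  have h1 : ‖a.1 - b.1‖ < ε := lt_of_le_of_lt (le_max_left _ _) (lt_of_lt_of_le ha (min_le_left _ _))
  have h2 : Real.sqrt |a.2 - b.2| < Real.sqrt ε :=
    lt_of_le_of_lt (le_max_right _ _) (lt_of_lt_of_le ha (min_le_right _ _))
  show max (dist a.1 b.1) (dist a.2 b.2) < ε
  apply max_lt
  · simpa [dist_eq_norm] using h1
  · have := Real.sqrt_lt_sqrt (Real.sqrt_nonneg _) h2  -- no
    rw [Real.dist_eq]
    nlinarith [Real.sq_sqrt (abs_nonneg (a.2 - b.2)), Real.sq_sqrt hε.le,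
      Real.sqrt_nonneg |a.2 - b.2|, Real.sqrt_nonneg ε, h2]



open scoped NNReal

lemma measurable_toPar : Measurable (toPar (N := N)) := continuous_toPar.measurable
lemma measurable_ofPar : Measurable (ofPar (N := N)) := continuous_ofPar.measurable

lemma lower_bound (N : ℕ) (hN : 1 ≤ N) :
    ((N : ℝ≥0∞) + 2) ≤ dimH (Set.univ : Set (ParSpace N)) := by
  classical
  haveI : Nonempty (Fin N) := Fin.pos_iff_nonempty.mp (by omega)
  set κ : ℝ := Real.sqrt Real.pi ^ N / Real.Gamma (N / 2 + 1) with hκ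
  have hκpos : 0 < κ := by
    apply div_pos (pow_pos (Real.sqrt_pos.mpr Real.pi_pos) N)
    exact Real.Gamma_pos_of_pos (by positivity)
  set D : ℝ≥0∞ := ENNReal.ofReal κ * 2 with hD
  have hD0 : D ≠ 0 := by
    simp [hD, ENNReal.ofReal_pos.mpr hκpos, (ENNReal.ofReal_pos.mpr hκpos).ne']
  have hDtop : D ≠ ⊤ := by simp [hD]; exact ENNReal.mul_ne_top ENNReal.ofReal_ne_top (by norm_num)
  set μ : Measure (ParSpace N) := Measure.map toPar volume with hμ
  set μ' : Measure (ParSpace N) := D⁻¹ • μ with hμ'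
  have key : μ' ≤ μH[(N : ℝ) + 2] := by
    apply MeasureTheory.Measure.le_hausdorffMeasure _ _ 1 one_pos
    intro s hs
    rcases s.eq_empty_or_nonempty with rfl | ⟨x0, hx0⟩
    · simp
    set r : ℝ≥0∞ := EMetric.diam s with hr
    have hrtop : r ≠ ⊤ := (lt_of_le_of_lt hs (by norm_num)).ne
    set r' : ℝ := r.toReal with hr'
    have hr'0 : 0 ≤ r' := ENNReal.toReal_nonneg
    -- the parabolic box containing s
    set B : Set (ParSpace N) :=
      ofPar ⁻¹' ((Metric.closedBall x0.1 r') ×ˢ (Set.Icc (x0.2 - r' ^ 2) (x0.2 + r' ^ 2))) with hB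
    have hBmeas : MeasurableSet B :=
      measurable_ofPar (measurableSet_closedBall.prod measurableSet_Icc)
    have hsB : s ⊆ B := by
      intro p hp
      have hd : dist p x0 ≤ r' := by
        rw [dist_edist]
        exact ENNReal.toReal_mono hrtop (EMetric.edist_le_diam_of_mem hp hx0)
      rw [parDist_def] at hd
      have h1 : ‖p.1 - x0.1‖ ≤ r' := le_trans (le_max_left _ _) hd
      have h2 : Real.sqrt |p.2 - x0.2| ≤ r' := le_trans (le_max_right _ _) hd
      have h2' : |p.2 - x0.2| ≤ r' ^ 2 := by
        have := Real.sq_sqrt (abs_nonneg (p.2 - x0.2))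
        nlinarith [Real.sqrt_nonneg |p.2 - x0.2|]
      have h2a := (abs_le.mp h2').1
      have h2b := (abs_le.mp h2').2
      refine ⟨?_, ?_, ?_⟩
      · show dist p.1 x0.1 ≤ r'
        rw [dist_eq_norm]; exact h1
      · show x0.2 - r' ^ 2 ≤ p.2
        linarith
      · show p.2 ≤ x0.2 + r' ^ 2
        linarith
    have hμB : μ B = ENNReal.ofReal r' ^ N * ENNReal.ofReal κ * ENNReal.ofReal (2 * r' ^ 2) := by
      rw [hμ, Measure.map_apply measurable_toPar hBmeas]
      have : toPar (N := N) ⁻¹' B =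
          (Metric.closedBall x0.1 r') ×ˢ (Set.Icc (x0.2 - r' ^ 2) (x0.2 + r' ^ 2)) := rfl
      have harith : x0.2 + r' ^ 2 - (x0.2 - r' ^ 2) = 2 * r' ^ 2 := by ring
      rw [this, Measure.volume_eq_prod, Measure.prod_prod,
        EuclideanSpace.volume_closedBall, Real.volume_Icc, Fintype.card_fin, harith, hκ]
    calc μ' s ≤ μ' B := measure_mono hsB
      _ = D⁻¹ * μ B := by rw [hμ']; simp
      _ = D⁻¹ * (D * (ENNReal.ofReal r' ^ (N + 2))) := by
          rw [hμB]
          congr 1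
          rw [hD, ENNReal.ofReal_mul (by norm_num : (0:ℝ) ≤ 2), ENNReal.ofReal_pow hr'0,
            ENNReal.ofReal_ofNat]
          ring
      _ = ENNReal.ofReal r' ^ (N + 2) := by
          rw [← mul_assoc, ENNReal.inv_mul_cancel hD0 hDtop, one_mul]
      _ = EMetric.diam s ^ ((N : ℝ) + 2) := by
          have hreq : ENNReal.ofReal r' = EMetric.diam s := by
            rw [hr', hr]; exact ENNReal.ofReal_toReal (hr ▸ hrtop)
          rw [show ((N : ℝ) + 2) = ((N + 2 : ℕ) : ℝ) by push_cast; ring, ENNReal.rpow_natCast,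
            hreq]
  have hμ'univ : μ' Set.univ = ⊤ := by
    rw [hμ', hμ]
    simp only [Measure.smul_apply, smul_eq_mul]
    rw [Measure.map_apply measurable_toPar MeasurableSet.univ]
    have : toPar (N := N) ⁻¹' Set.univ = Set.univ := rfl
    rw [this, Measure.volume_eq_prod, ← Set.univ_prod_univ, Measure.prod_prod,
      Real.volume_univ]
    have hEpos : (volume (Set.univ : Set (EuclideanSpace ℝ (Fin N)))) ≠ 0 := by
      refine (lt_of_lt_of_le ?_ (measure_mono (Set.subset_univ (Metric.ball 0 1)))).ne'
      exact Metric.measure_ball_pos _ _ one_pos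
    rw [ENNReal.mul_top hEpos, ENNReal.mul_top (ENNReal.inv_ne_zero.mpr hDtop)]
  have htop : μH[(N : ℝ) + 2] (Set.univ : Set (ParSpace N)) = ⊤ :=
    top_le_iff.mp (hμ'univ ▸ key Set.univ)
  have := le_dimH_of_hausdorffMeasure_eq_top
    (d := (N : ℝ≥0) + 2) (s := (Set.univ : Set (ParSpace N))) (by
      rw [show (((N : ℝ≥0) + 2 : ℝ≥0) : ℝ) = (N : ℝ) + 2 by push_cast; ring]; exact htop)
  calc ((N : ℝ≥0∞) + 2) = (((N : ℝ≥0) + 2 : ℝ≥0) : ℝ≥0∞) := by push_cast; ring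
    _ ≤ _ := this

-- grid lemma
lemma grid_lemma (a δ : ℝ) (hδ : 0 < δ) (K : ℕ) (hK : 1 ≤ K) (y : ℝ)
    (hy : y ∈ Set.Icc a (a + K * δ)) :
    ∃ k : Fin K, |y - (a + (k + 1/2) * δ)| ≤ δ / 2 := by
  set u : ℝ := (y - a) / δ with hu
  have hu0 : 0 ≤ u := div_nonneg (by linarith [hy.1]) hδ.le
  have huK : u ≤ K := by
    rw [hu, div_le_iff₀ hδ]
    linarith [hy.2]
  have key : ∃ k : Fin K, (k : ℝ) ≤ u ∧ u ≤ k + 1 := by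
    by_cases h : ⌊u⌋₊ ≤ K - 1
    · refine ⟨⟨⌊u⌋₊, by omega⟩, ?_, ?_⟩
      · exact_mod_cast Nat.floor_le hu0
      · exact_mod_cast (Nat.lt_floor_add_one u).le
    · push_neg at h
      have hKu : (K : ℝ) ≤ u := by
        have : K ≤ ⌊u⌋₊ := by omega
        exact_mod_cast le_trans (Nat.cast_le.mpr this) (Nat.floor_le hu0)
      refine ⟨⟨K - 1, by omega⟩, ?_, ?_⟩
      · have : ((K - 1 : ℕ) : ℝ) ≤ (K : ℝ) := by exact_mod_cast Nat.sub_le K 1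
        linarith
      · have : ((K - 1 : ℕ) : ℝ) + 1 = K := by
          have : (1:ℕ) ≤ K := hK
          push_cast [Nat.cast_sub this]
          ring
        linarith [huK, this.ge]
  obtain ⟨k, h1, h2⟩ := key
  refine ⟨k, ?_⟩
  have hy' : y = a + u * δ := by rw [hu, div_mul_cancel₀ _ hδ.ne']; ring
  rw [hy', abs_le]
  constructor <;> nlinarith

lemma coord_le_norm {N : ℕ} (x : EuclideanSpace ℝ (Fin N)) (i : Fin N) : |x i| ≤ ‖x‖ := by
  rw [EuclideanSpace.norm_eq,
    show |x i| = Real.sqrt (‖x i‖ ^ 2) by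
      rw [Real.sqrt_sq_eq_abs, Real.norm_eq_abs, abs_abs]]
  apply Real.sqrt_le_sqrt
  exact Finset.single_le_sum (f := fun j => ‖x j‖ ^ 2) (fun j _ => by positivity)
    (Finset.mem_univ i)

lemma norm_le_of_coords {N : ℕ} (x : EuclideanSpace ℝ (Fin N)) (b : ℝ) (hb : 0 ≤ b)
    (h : ∀ i, |x i| ≤ b) : ‖x‖ ≤ Real.sqrt N * b := by
  rw [EuclideanSpace.norm_eq]
  have hsum : ∑ i, ‖x i‖ ^ 2 ≤ ∑ _i : Fin N, b ^ 2 := by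
    apply Finset.sum_le_sum
    intro i _
    have := h i
    rw [Real.norm_eq_abs]
    nlinarith [abs_nonneg (x i)]
  calc Real.sqrt (∑ i, ‖x i‖ ^ 2) ≤ Real.sqrt (N * b ^ 2) := by
        apply Real.sqrt_le_sqrt; simpa using hsum
    _ = Real.sqrt N * b := by
        rw [Real.sqrt_mul (Nat.cast_nonneg N), Real.sqrt_sq hb]

lemma ball_measure_ne_top (N : ℕ) (hN : 1 ≤ N) (m : ℕ) :
    μH[(N : ℝ) + 2] (Metric.closedBall (ParSpace.origin N) m) ≠ ⊤ := by
  classical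
  have hN0 : (0 : ℝ) < N := by exact_mod_cast hN
  set M : ℝ := (m : ℝ) + 1 with hM
  have hM0 : 0 < M := by positivity
  set ρ : ℕ → ℝ := fun n => M / (n + 1) with hρdef
  have hρ : ∀ n, 0 < ρ n := fun n => by positivity
  set K : ℕ → ℕ := fun n => 2 * N * (n + 1) with hKdef
  set L : ℕ → ℕ := fun n => (n + 1) ^ 2 with hLdef
  set δ : ℕ → ℝ := fun n => ρ n / N with hδdef
  have hδ : ∀ n, 0 < δ n := fun n => div_pos (hρ n) hN0
  -- centers and covering sets
  set t : ∀ n : ℕ, ((Fin N → Fin (K n)) × Fin (L n)) → Set (ParSpace N) :=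
    fun n i => Metric.closedBall
      (toPar (WithLp.toLp 2 (fun k => -M + ((i.1 k : ℝ) + 1/2) * δ n : Fin N → ℝ),
        -M ^ 2 + ((i.2 : ℝ) + 1/2) * (2 * ρ n ^ 2)) : ParSpace N) (ρ n) with htdef
  -- diameters
  have hdiam : ∀ n i, EMetric.diam (t n i) ≤ ENNReal.ofReal (2 * ρ n) := by
    intro n i
    rw [htdef]
    dsimp only
    rw [← Metric.emetric_closedBall (hρ n).le]
    refine le_trans EMetric.diam_closedBall (le_of_eq ?_)
    rw [ENNReal.ofReal_mul (by norm_num : (0:ℝ) ≤ 2), ENNReal.ofReal_ofNat]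
  -- the covering property
  have hcov : ∀ n, Metric.closedBall (ParSpace.origin N) m ⊆ ⋃ i, t n i := by
    intro n p hp
    rw [Metric.mem_closedBall, parDist_def] at hp
    have hx : ‖p.1‖ ≤ M := by
      have : ‖p.1 - (ParSpace.origin N).1‖ ≤ m := le_trans (le_max_left _ _) hp
      have h0 : (ParSpace.origin N).1 = 0 := rfl
      rw [h0, sub_zero] at this
      linarith
    have ht' : |p.2| ≤ M ^ 2 := by
      have h1 : Real.sqrt |p.2 - (ParSpace.origin N).2| ≤ m := le_trans (le_max_right _ _) hp
      have h0 : (ParSpace.origin N).2 = 0 := rfl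
      rw [h0, sub_zero] at h1
      have := Real.sq_sqrt (abs_nonneg p.2)
      nlinarith [Real.sqrt_nonneg |p.2|]
    -- spatial grid
    have hKδ : -M + (K n : ℝ) * δ n = M := by
      rw [hKdef, hδdef, hρdef]
      push_cast
      field_simp
      ring
    have hgrid : ∀ k : Fin N, ∃ j : Fin (K n),
        |p.1 k - (-M + ((j : ℝ) + 1/2) * δ n)| ≤ δ n / 2 := by
      intro k
      apply grid_lemma (-M) (δ n) (hδ n) (K n)
        (le_trans (by omega) (Nat.le_mul_of_pos_right (2 * N) (by omega)))
      rw [hKδ]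
      have := coord_le_norm p.1 k
      have h1 := abs_le.mp (le_trans this hx)
      exact ⟨h1.1, h1.2⟩
    choose f hf using hgrid
    -- time grid
    have hLδ : -M ^ 2 + (L n : ℝ) * (2 * ρ n ^ 2) = M ^ 2 := by
      rw [hLdef, hρdef]
      push_cast
      field_simp
      ring
    have htgrid : ∃ j : Fin (L n),
        |p.2 - (-M ^ 2 + ((j : ℝ) + 1/2) * (2 * ρ n ^ 2))| ≤ (2 * ρ n ^ 2) / 2 := by
      apply grid_lemma (-M ^ 2) (2 * ρ n ^ 2) (by have := hρ n; positivity) (L n)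
        (Nat.one_le_pow _ _ (by omega))
      rw [hLδ]
      have h1 := abs_le.mp ht'
      exact ⟨by linarith [h1.1], by linarith [h1.2]⟩
    obtain ⟨j, hj⟩ := htgrid
    refine Set.mem_iUnion.mpr ⟨(f, j), ?_⟩
    rw [htdef]
    dsimp only
    rw [Metric.mem_closedBall, parDist_def]
    apply max_le
    · -- spatial estimate
      refine le_trans (norm_le_of_coords _ (δ n / 2)
        (by have := hδ n; positivity) (fun k => ?_)) ?_
      · show |p.1 k - (-M + ((f k : ℝ) + 1/2) * δ n)| ≤ δ n / 2
        exact hf k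
      -- √N * (δ n / 2) ≤ ρ n
      have hs1 : 1 ≤ Real.sqrt N := Real.one_le_sqrt.mpr (by exact_mod_cast hN)
      have hs2 : Real.sqrt N ^ 2 = (N : ℝ) := Real.sq_sqrt (by positivity)
      rw [hδdef]
      have hρn := hρ n
      rw [div_div]
      rw [show Real.sqrt N * (ρ n / ((N : ℝ) * 2)) = ρ n * (Real.sqrt N / ((N : ℝ) * 2)) by ring]
      have hfrac : Real.sqrt N / ((N : ℝ) * 2) ≤ 1 := by
        rw [div_le_one (by positivity)]
        nlinarith
      calc ρ n * (Real.sqrt N / ((N : ℝ) * 2)) ≤ ρ n * 1 :=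
            mul_le_mul_of_nonneg_left hfrac hρn.le
        _ = ρ n := mul_one _
    · -- time estimate
      have : |p.2 - (-M ^ 2 + ((j : ℝ) + 1/2) * (2 * ρ n ^ 2))| ≤ ρ n ^ 2 := by
        refine le_trans hj ?_
        exact le_of_eq (by ring)
      calc Real.sqrt |p.2 - (-M ^ 2 + ((j : ℝ) + 1/2) * (2 * ρ n ^ 2))|
          ≤ Real.sqrt (ρ n ^ 2) := Real.sqrt_le_sqrt this
        _ = ρ n := Real.sqrt_sq (hρ n).le
  -- tendsto of radii
  have hr0 : Filter.Tendsto (fun n : ℕ => ENNReal.ofReal (2 * ρ n)) Filter.atTop (nhds 0) := by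
    have h1 : Filter.Tendsto (fun n : ℕ => 2 * M / (n : ℝ)) Filter.atTop (nhds 0) :=
      tendsto_const_div_atTop_nhds_zero_nat (2 * M)
    have h2 : Filter.Tendsto (fun n : ℕ => 2 * M / ((n : ℝ) + 1)) Filter.atTop (nhds 0) := by
      have h := h1.comp (Filter.tendsto_add_atTop_nat 1)
      exact Filter.Tendsto.congr (fun x => by simp only [Function.comp_apply]; push_cast; ring) h
    have h3 : (fun n : ℕ => 2 * ρ n) = fun n : ℕ => 2 * M / ((n : ℝ) + 1) := by
      funext n; rw [hρdef]; ring
    rw [show (0 : ℝ≥0∞) = ENNReal.ofReal 0 by simp]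
    exact (ENNReal.continuous_ofReal.tendsto 0).comp (h3 ▸ h2)
  -- the sum bound
  set C : ℝ := (2 * N : ℝ) ^ N * (2 * M) ^ (N + 2) with hC
  have hsum : ∀ n : ℕ, (∑ i : (Fin N → Fin (K n)) × Fin (L n),
      EMetric.diam (t n i) ^ ((N : ℝ) + 2)) ≤ ENNReal.ofReal C := by
    intro n
    have hterm : ∀ i, EMetric.diam (t n i) ^ ((N : ℝ) + 2)
        ≤ ENNReal.ofReal ((2 * ρ n) ^ (N + 2)) := by
      intro i
      rw [show ((N : ℝ) + 2) = ((N + 2 : ℕ) : ℝ) by push_cast; ring, ENNReal.rpow_natCast,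
        ENNReal.ofReal_pow (by have := hρ n; positivity)]
      exact pow_le_pow_left₀ zero_le (hdiam n i) _
    calc (∑ i : (Fin N → Fin (K n)) × Fin (L n), EMetric.diam (t n i) ^ ((N : ℝ) + 2))
        ≤ ∑ _i : (Fin N → Fin (K n)) × Fin (L n), ENNReal.ofReal ((2 * ρ n) ^ (N + 2)) :=
          Finset.sum_le_sum fun i _ => hterm i
      _ = (Fintype.card ((Fin N → Fin (K n)) × Fin (L n)) : ℝ≥0∞)
            * ENNReal.ofReal ((2 * ρ n) ^ (N + 2)) := by
          rw [Finset.sum_const, Finset.card_univ, nsmul_eq_mul]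
      _ = ENNReal.ofReal (((K n : ℝ)) ^ N * (L n : ℝ) * (2 * ρ n) ^ (N + 2)) := by
          rw [Fintype.card_prod, Fintype.card_fun, Fintype.card_fin, Fintype.card_fin,
            Fintype.card_fin, ← ENNReal.ofReal_natCast, ← ENNReal.ofReal_mul (by positivity)]
          congr 1
          push_cast
          ring
      _ = ENNReal.ofReal C := by
          congr 1
          have hn1 : ((n : ℝ) + 1) ≠ 0 := by positivity
          simp only [hC, hKdef, hLdef, hρdef]
          push_cast
          rw [mul_pow (2 * (N : ℝ)) ((n : ℝ) + 1),
            show 2 * (M / ((n : ℝ) + 1)) = 2 * M / ((n : ℝ) + 1) by ring,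
            div_pow, pow_add ((n : ℝ) + 1) N 2]
          field_simp
  refine ne_top_of_le_ne_top (by simp : ENNReal.ofReal C ≠ ⊤) ?_
  refine le_trans (MeasureTheory.Measure.hausdorffMeasure_le_liminf_sum ((N : ℝ) + 2)
    (Metric.closedBall (ParSpace.origin N) m) (fun n => ENNReal.ofReal (2 * ρ n)) hr0 t
    (Filter.Eventually.of_forall hdiam) (Filter.Eventually.of_forall hcov)) ?_
  calc Filter.liminf (fun n => ∑ i, EMetric.diam (t n i) ^ ((N : ℝ) + 2)) Filter.atTop
      ≤ Filter.liminf (fun _n : ℕ => ENNReal.ofReal C) Filter.atTop :=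
        Filter.liminf_le_liminf (Filter.Eventually.of_forall hsum)
    _ = ENNReal.ofReal C := Filter.liminf_const _

lemma upper_bound (N : ℕ) (hN : 1 ≤ N) :
    dimH (Set.univ : Set (ParSpace N)) ≤ (N : ℝ≥0∞) + 2 := by
  have hcover : (Set.univ : Set (ParSpace N))
      = ⋃ m : ℕ, Metric.closedBall (ParSpace.origin N) m := by
    ext p
    simp only [Set.mem_univ, true_iff, Set.mem_iUnion, Metric.mem_closedBall]
    exact ⟨⌈dist p (ParSpace.origin N)⌉₊, Nat.le_ceil _⟩
  rw [hcover, dimH_iUnion]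
  refine iSup_le fun m => ?_
  have h1 : μH[(((N : ℝ≥0) + 2 : ℝ≥0) : ℝ)]
      (Metric.closedBall (ParSpace.origin N) (m : ℝ)) ≠ ⊤ := by
    rw [show (((N : ℝ≥0) + 2 : ℝ≥0) : ℝ) = (N : ℝ) + 2 by push_cast; ring]
    exact ball_measure_ne_top N hN m
  calc dimH (Metric.closedBall (ParSpace.origin N) (m : ℝ))
      ≤ (((N : ℝ≥0) + 2 : ℝ≥0) : ℝ≥0∞) := dimH_le_of_hausdorffMeasure_ne_top h1
    _ = (N : ℝ≥0∞) + 2 := by push_cast; ring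

end Aux

end ParSpaceAux

open MeasureTheory

/-- The Hausdorff dimension of spacetime `ℝ^N × ℝ` with the parabolic metric is `N + 2`. -/
theorem parabolic_dimH_univ (N : ℕ) (hN : 1 ≤ N) :
    dimH (Set.univ : Set (ParSpace N)) = (N : ℝ≥0∞) + 2 := by
  exact le_antisymm (ParSpaceAux.upper_bound N hN) (ParSpaceAux.lower_bound N hN)
end

section
/- Let N ≥ 1, let V ⊆ ℝ^N be a j-dimensional linear subspace (0 ≤ j ≤ N), and let t₀ ∈ ℝ. With respect to the parabolic metric d on ℝ^N × ℝ, the Hausdorff dimension of V × {t₀} equals j, and the Hausdorff dimension of V × ℝ equals j + 2. -/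
open scoped ENNReal

open MeasureTheory

noncomputable section AuxLemmas

open MeasureTheory Metric Set Filter

variable {N j : ℕ}

/-- Embedding of `ℝ^j × ℝ` into parabolic space via a linear isometry. -/
def parMap (L : EuclideanSpace ℝ (Fin j) →ₗᵢ[ℝ] EuclideanSpace ℝ (Fin N))
    (p : EuclideanSpace ℝ (Fin j) × ℝ) : ParSpace N := (L p.1, p.2)

lemma parMap_dist (L : EuclideanSpace ℝ (Fin j) →ₗᵢ[ℝ] EuclideanSpace ℝ (Fin N))
    (p q : EuclideanSpace ℝ (Fin j) × ℝ) :
    dist (parMap L p) (parMap L q) = max ‖p.1 - q.1‖ (Real.sqrt |p.2 - q.2|) := by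
  show max ‖L p.1 - L q.1‖ (Real.sqrt |p.2 - q.2|) = _
  rw [← map_sub, L.norm_map]

lemma continuous_parMap (L : EuclideanSpace ℝ (Fin j) →ₗᵢ[ℝ] EuclideanSpace ℝ (Fin N)) :
    Continuous (parMap L) := by
  rw [Metric.continuous_iff]
  intro b ε hε
  refine ⟨min ε (ε ^ 2), lt_min hε (by positivity), fun a hab => ?_⟩
  rw [parMap_dist]
  have hab' : max (dist a.1 b.1) (dist a.2 b.2) < min ε (ε ^ 2) := by
    rw [← Prod.dist_eq]; exact hab
  have h1 : dist a.1 b.1 < min ε (ε ^ 2) := (le_max_left _ _).trans_lt hab'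
  have h2 : dist a.2 b.2 < min ε (ε ^ 2) := (le_max_right _ _).trans_lt hab'
  apply max_lt
  · rw [← dist_eq_norm]; exact h1.trans_le (min_le_left _ _)
  · rw [Real.sqrt_lt' hε]
    calc |a.2 - b.2| = dist a.2 b.2 := (Real.dist_eq _ _).symm
      _ < ε ^ 2 := h2.trans_le (min_le_right _ _)

lemma lipschitz_fst : LipschitzWith 1 (fun X : ParSpace N => X.1) := by
  apply LipschitzWith.of_dist_le_mul
  intro X Y
  rw [NNReal.coe_one, one_mul]
  show dist X.1 Y.1 ≤ max ‖X.1 - Y.1‖ (Real.sqrt |X.2 - Y.2|)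
  rw [dist_eq_norm]
  exact le_max_left _ _

lemma measurableSet_range_parMap (L : EuclideanSpace ℝ (Fin j) →ₗᵢ[ℝ] EuclideanSpace ℝ (Fin N)) :
    MeasurableSet (Set.range (parMap L)) := by
  have hset : Set.range (parMap L) = (fun X : ParSpace N => X.1) ⁻¹' (Set.range L) := by
    ext X
    constructor
    · rintro ⟨p, rfl⟩; exact ⟨p.1, rfl⟩
    · rintro ⟨y, hy⟩; exact ⟨(y, X.2), Prod.ext hy rfl⟩
  rw [hset]
  have hcl : IsClosed (Set.range (L : EuclideanSpace ℝ (Fin j) →ₗᵢ[ℝ] EuclideanSpace ℝ (Fin N))) := by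
    have : Set.range L = (LinearMap.range L.toLinearMap : Set (EuclideanSpace ℝ (Fin N))) := by
      simp [LinearMap.coe_range]
    rw [this]
    exact (LinearMap.range L.toLinearMap).closed_of_finiteDimensional
  exact lipschitz_fst.continuous.measurable (hcl.measurableSet)

end AuxLemmas
noncomputable section AuxLemmas2

open MeasureTheory Metric Set Filter

variable {N j : ℕ}

lemma isometry_slice (L : EuclideanSpace ℝ (Fin j) →ₗᵢ[ℝ] EuclideanSpace ℝ (Fin N)) (t₀ : ℝ) :
    Isometry (fun y : EuclideanSpace ℝ (Fin j) => (parMap L (y, t₀))) := by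
  apply Isometry.of_dist_eq
  intro y y'
  rw [parMap_dist]
  simp [dist_eq_norm]

lemma dimH_slice (L : EuclideanSpace ℝ (Fin j) →ₗᵢ[ℝ] EuclideanSpace ℝ (Fin N)) (t₀ : ℝ) :
    dimH ((fun y : EuclideanSpace ℝ (Fin j) => (parMap L (y, t₀))) '' Set.univ) = (j : ℝ≥0∞) := by
  rw [(isometry_slice L t₀).dimH_image, Real.dimH_univ_eq_finrank, finrank_euclideanSpace_fin]

/-- Subdivision of an interval into `m` cells of length `δ`. -/
lemma exists_cell (A δ : ℝ) (hδ : 0 < δ) (m : ℕ) (hm : 0 < m) (x : ℝ)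
    (hx1 : A ≤ x) (hx2 : x ≤ A + m * δ) :
    ∃ c : Fin m, A + c * δ ≤ x ∧ x ≤ A + (c + 1) * δ := by
  set c₀ := ⌊(x - A) / δ⌋₊ with hc₀
  have hxA : 0 ≤ (x - A) / δ := div_nonneg (by linarith) hδ.le
  by_cases h : c₀ < m
  · refine ⟨⟨c₀, h⟩, ?_, ?_⟩
    · have := Nat.floor_le hxA
      have : (c₀ : ℝ) * δ ≤ x - A := by
        rw [← le_div_iff₀ hδ]; exact this
      simpa using by linarith
    · have := Nat.lt_floor_add_one ((x - A) / δ)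
      have hlt : x - A < ((c₀ : ℝ) + 1) * δ := by
        rw [← div_lt_iff₀ hδ]; exact this
      simpa using by linarith
  · push_neg at h
    refine ⟨⟨m - 1, by omega⟩, ?_, ?_⟩
    · have h1 : (m : ℝ) ≤ c₀ := by exact_mod_cast h
      have h2 : (c₀ : ℝ) ≤ (x - A) / δ := Nat.floor_le hxA
      have h3 : ((m : ℝ) - 1) * δ ≤ x - A := by
        rw [← le_div_iff₀ hδ] at *
        nlinarith [hδ.le]
      have hcast : ((⟨m - 1, by omega⟩ : Fin m) : ℝ) = (m : ℝ) - 1 := by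
        simp only [Fin.val_mk]
        push_cast [Nat.cast_sub hm]
        ring
      rw [hcast]; linarith
    · have hcast : ((⟨m - 1, by omega⟩ : Fin m) : ℝ) = (m : ℝ) - 1 := by
        simp only [Fin.val_mk]
        push_cast [Nat.cast_sub hm]
        ring
      rw [hcast]
      have : ((m : ℝ) - 1 + 1) * δ = m * δ := by ring
      rw [this]; linarith

end AuxLemmas2
noncomputable section AuxLemmas3

open MeasureTheory Metric Set Filter
open scoped NNReal

variable {N j : ℕ}

lemma dimH_range_parMap_ge (L : EuclideanSpace ℝ (Fin j) →ₗᵢ[ℝ] EuclideanSpace ℝ (Fin N)) :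
    (j : ℝ≥0∞) + 2 ≤ dimH (Set.range (parMap L)) := by
  classical
  set E := EuclideanSpace ℝ (Fin j)
  set d : ℝ := (j : ℝ) + 2 with hd
  set κ : ℝ≥0∞ := volume (Metric.ball (0 : E) 1) with hκ
  have hκ0 : κ ≠ 0 := (measure_ball_pos volume 0 one_pos).ne'
  have hκtop : κ ≠ ⊤ := measure_ball_lt_top.ne
  set C : ℝ≥0∞ := ENNReal.ofReal (2 ^ j * 8) * κ with hC
  have hC0 : C ≠ 0 := by
    apply mul_ne_zero _ hκ0
    simp only [ne_eq, ENNReal.ofReal_eq_zero, not_le]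
    positivity
  have hCtop : C ≠ ⊤ := ENNReal.mul_ne_top ENNReal.ofReal_ne_top hκtop
  have hmeas : Measurable (parMap L) := (continuous_parMap L).measurable
  set μ : Measure (ParSpace N) := Measure.map (parMap L) volume with hμ
  -- key bound : μ s ≤ C * diam s ^ d for sets of small diameter
  have key : ∀ s : Set (ParSpace N), EMetric.diam s ≤ 1 →
      μ s ≤ C * EMetric.diam s ^ d := by
    intro s hs
    rcases s.eq_empty_or_nonempty with rfl | ⟨X₀, hX₀⟩
    · simp
    have hDtop : EMetric.diam s ≠ ⊤ := (hs.trans_lt ENNReal.one_lt_top).ne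
    set D : ℝ := (EMetric.diam s).toReal with hDdef
    have hD0 : 0 ≤ D := ENNReal.toReal_nonneg
    have hDeq : ENNReal.ofReal D = EMetric.diam s := ENNReal.ofReal_toReal hDtop
    -- s is contained in a closed ball of radius D
    have hsub : s ⊆ Metric.closedBall X₀ D := by
      intro X hX
      rw [Metric.mem_closedBall, dist_edist]
      exact ENNReal.toReal_mono hDtop (EMetric.edist_le_diam_of_mem hX hX₀)
    have hμs : μ s ≤ volume ((parMap L) ⁻¹' Metric.closedBall X₀ D) := by
      calc μ s ≤ μ (Metric.closedBall X₀ D) := measure_mono hsub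
        _ = volume ((parMap L) ⁻¹' Metric.closedBall X₀ D) :=
          Measure.map_apply hmeas measurableSet_closedBall
    rcases ((parMap L) ⁻¹' Metric.closedBall X₀ D).eq_empty_or_nonempty with he | ⟨⟨y₁, t₁⟩, hp⟩
    · rw [he] at hμs; simp only [measure_empty, nonpos_iff_eq_zero] at hμs
      rw [hμs]; exact zero_le
    -- the preimage is contained in a product box
    have hbox : (parMap L) ⁻¹' Metric.closedBall X₀ D ⊆
        Metric.closedBall y₁ (2 * D) ×ˢ Set.Icc (t₁ - 4 * D ^ 2) (t₁ + 4 * D ^ 2) := by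
      rintro ⟨y, t⟩ hyt
      have hdist : dist (parMap L (y, t)) (parMap L (y₁, t₁)) ≤ 2 * D := by
        calc dist (parMap L (y, t)) (parMap L (y₁, t₁))
            ≤ dist (parMap L (y, t)) X₀ + dist X₀ (parMap L (y₁, t₁)) := dist_triangle _ _ _
          _ ≤ D + D := add_le_add (Metric.mem_closedBall.mp hyt)
              (by rw [dist_comm]; exact Metric.mem_closedBall.mp hp)
          _ = 2 * D := by ring
      rw [parMap_dist] at hdist
      have h1 : ‖y - y₁‖ ≤ 2 * D := (le_max_left _ _).trans hdist
      have h2 : Real.sqrt |t - t₁| ≤ 2 * D := (le_max_right _ _).trans hdist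
      have h2' : |t - t₁| ≤ 4 * D ^ 2 := by
        have := Real.sq_sqrt (abs_nonneg (t - t₁))
        nlinarith [Real.sqrt_nonneg (|t - t₁|)]
      rw [abs_le] at h2'
      obtain ⟨ha, hb⟩ := h2'
      constructor
      · rw [Metric.mem_closedBall, dist_eq_norm]; exact h1
      · rw [Set.mem_Icc]
        constructor
        · show t₁ - 4 * D ^ 2 ≤ t; linarith
        · show t ≤ t₁ + 4 * D ^ 2; linarith
    have hvol : volume ((parMap L) ⁻¹' Metric.closedBall X₀ D) ≤ C * ENNReal.ofReal (D ^ (j + 2)) := by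
      calc volume ((parMap L) ⁻¹' Metric.closedBall X₀ D)
          ≤ volume (Metric.closedBall y₁ (2 * D) ×ˢ Set.Icc (t₁ - 4 * D ^ 2) (t₁ + 4 * D ^ 2)) :=
            measure_mono hbox
        _ = volume (Metric.closedBall y₁ (2 * D)) * volume (Set.Icc (t₁ - 4 * D ^ 2) (t₁ + 4 * D ^ 2)) := by
            rw [MeasureTheory.Measure.volume_eq_prod, Measure.prod_prod]
        _ = (ENNReal.ofReal ((2 * D) ^ Module.finrank ℝ E) * κ) * ENNReal.ofReal (8 * D ^ 2) := by
            rw [Measure.addHaar_closedBall volume y₁ (by positivity), Real.volume_Icc]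
            congr 1
            rw [show t₁ + 4 * D ^ 2 - (t₁ - 4 * D ^ 2) = 8 * D ^ 2 by ring]
        _ = C * ENNReal.ofReal (D ^ (j + 2)) := by
            rw [finrank_euclideanSpace_fin, hC]
            rw [mul_right_comm, mul_right_comm (ENNReal.ofReal (2 ^ j * 8)) κ]
            congr 1
            rw [← ENNReal.ofReal_mul (by positivity), ← ENNReal.ofReal_mul (by positivity)]
            congr 1
            ring
    calc μ s ≤ C * ENNReal.ofReal (D ^ (j + 2)) := hμs.trans hvol
      _ = C * EMetric.diam s ^ d := by
          congr 1
          rw [← hDeq, ENNReal.ofReal_rpow_of_nonneg hD0 (by positivity)]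
          congr 1
          rw [hd, show (j : ℝ) + 2 = ((j + 2 : ℕ) : ℝ) by push_cast; ring, Real.rpow_natCast]
  -- mass distribution principle
  set ν : Measure (ParSpace N) := C⁻¹ • μ with hν
  have hνle : ν ≤ μH[d] := by
    apply MeasureTheory.Measure.le_hausdorffMeasure d ν 1 one_pos
    intro s hs
    have := key s hs
    calc ν s = C⁻¹ * μ s := by rw [hν]; simp
      _ ≤ C⁻¹ * (C * EMetric.diam s ^ d) := mul_le_mul_right this _
      _ = EMetric.diam s ^ d := by
          rw [← mul_assoc, ENNReal.inv_mul_cancel hC0 hCtop, one_mul]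
  -- μ of the range is infinite
  have hμrange : μ (Set.range (parMap L)) = ⊤ := by
    rw [hμ, Measure.map_apply hmeas (measurableSet_range_parMap L),
      Set.preimage_range, ← Set.univ_prod_univ, MeasureTheory.Measure.volume_eq_prod,
      Measure.prod_prod, Real.volume_univ]
    have h0 : volume (Set.univ : Set E) ≠ 0 := by
      intro h
      have hb : volume (Metric.ball (0 : E) 1) ≤ volume (Set.univ : Set E) :=
        measure_mono (Set.subset_univ _)
      rw [h] at hb
      exact hκ0 (le_antisymm hb zero_le)
    exact ENNReal.mul_top h0
  have hHtop : μH[d] (Set.range (parMap L)) = ⊤ := by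
    have h1 : ν (Set.range (parMap L)) = ⊤ := by
      rw [hν]
      simp only [Measure.smul_apply, smul_eq_mul, hμrange]
      exact ENNReal.mul_top (ENNReal.inv_ne_zero.mpr hCtop)
    exact top_le_iff.mp (h1 ▸ hνle (Set.range (parMap L)))
  have hcast : ((((j : ℝ≥0) + 2 : ℝ≥0)) : ℝ) = d := by push_cast; ring
  have h2 : μH[(((j : ℝ≥0) + 2 : ℝ≥0) : ℝ)] (Set.range (parMap L)) = ⊤ := by
    rw [hcast]; exact hHtop
  have h3 := le_dimH_of_hausdorffMeasure_eq_top h2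
  refine le_trans (le_of_eq ?_) h3
  push_cast
  ring

end AuxLemmas3
noncomputable section AuxLemmas4

open MeasureTheory Metric Set Filter
open scoped NNReal Topology

variable {N j : ℕ}

lemma dimH_piece_le (L : EuclideanSpace ℝ (Fin j) →ₗᵢ[ℝ] EuclideanSpace ℝ (Fin N))
    (K : ℝ) (hK : 1 ≤ K) :
    dimH (parMap L '' (Metric.closedBall (0 : EuclideanSpace ℝ (Fin j)) K ×ˢ Set.Icc (-K) K))
      ≤ (j : ℝ≥0∞) + 2 := by
  classical
  set E := EuclideanSpace ℝ (Fin j)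
  set d : ℝ := (j : ℝ) + 2 with hd
  have hK0 : 0 < K := lt_of_lt_of_le one_pos hK
  set c : ℝ := (Real.sqrt j + 1) * K with hc
  have hc0 : 0 < c := by positivity
  set P := parMap L '' (Metric.closedBall (0 : E) K ×ˢ Set.Icc (-K) K) with hP
  -- scales
  set δ : ℕ → ℝ := fun n => K / (n + 1) with hδ
  have hδ0 : ∀ n, 0 < δ n := fun n => by positivity
  set r : ℕ → ℝ≥0∞ := fun n => ENNReal.ofReal (c / (n + 1)) with hr
  have hrc : ∀ n : ℕ, c / ((n : ℝ) + 1) = (Real.sqrt j + 1) * δ n := fun n => by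
    rw [hc, hδ]; ring
  have hrtendsto : Tendsto r atTop (𝓝 0) := by
    rw [show (0 : ℝ≥0∞) = ENNReal.ofReal 0 by simp]
    apply ENNReal.tendsto_ofReal
    exact tendsto_const_nhds.div_atTop
      (tendsto_atTop_add_const_right atTop 1 tendsto_natCast_atTop_atTop)
  -- the covering pieces
  set t : ∀ n : ℕ, ((Fin j → Fin (2 * (n + 1))) × Fin (2 * (n + 1) ^ 2)) → Set (ParSpace N) :=
    fun n i => parMap L ''
      (({y : E | ∀ k : Fin j, y k ∈ Set.Icc (-K + (i.1 k : ℝ) * δ n) (-K + ((i.1 k : ℝ) + 1) * δ n)}) ×ˢ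
        (Set.Icc (-K + (i.2 : ℝ) * (δ n) ^ 2) (-K + ((i.2 : ℝ) + 1) * (δ n) ^ 2))) with ht
  -- diameter bound
  have hdiam : ∀ n i, EMetric.diam (t n i) ≤ r n := by
    intro n i
    apply EMetric.diam_le
    rintro X ⟨⟨y, s⟩, ⟨hy, hs⟩, rfl⟩ Y ⟨⟨y', s'⟩, ⟨hy', hs'⟩, rfl⟩
    rw [edist_dist, parMap_dist]
    apply ENNReal.ofReal_le_ofReal
    rw [hrc n]
    have hyk : ∀ k : Fin j, |y k - y' k| ≤ δ n := by
      intro k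
      have h1 := hy k
      have h2 := hy' k
      rw [Set.mem_Icc] at h1 h2
      rw [abs_le]
      constructor <;> nlinarith [h1.1, h1.2, h2.1, h2.2]
    have hnorm : ‖y - y'‖ ≤ Real.sqrt j * δ n := by
      rw [EuclideanSpace.norm_eq]
      have hsum : ∑ k, ‖(y - y') k‖ ^ 2 ≤ (j : ℝ) * (δ n) ^ 2 := by
        calc ∑ k, ‖(y - y') k‖ ^ 2 ≤ ∑ _k : Fin j, (δ n) ^ 2 := by
              apply Finset.sum_le_sum
              intro k _
              have : ‖(y - y') k‖ = |y k - y' k| := by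
                simp [PiLp.sub_apply, Real.norm_eq_abs]
              rw [this]
              have := hyk k
              nlinarith [abs_nonneg (y k - y' k)]
          _ = (j : ℝ) * (δ n) ^ 2 := by simp [mul_comm]
      calc Real.sqrt (∑ k, ‖(y - y') k‖ ^ 2) ≤ Real.sqrt ((j : ℝ) * (δ n) ^ 2) :=
            Real.sqrt_le_sqrt hsum
        _ = Real.sqrt j * δ n := by
            rw [Real.sqrt_mul (Nat.cast_nonneg j), Real.sqrt_sq (hδ0 n).le]
    have htime : Real.sqrt |s - s'| ≤ δ n := by
      rw [Set.mem_Icc] at hs hs'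
      have habs : |s - s'| ≤ (δ n) ^ 2 := by
        rw [abs_le]
        constructor <;> nlinarith [hs.1, hs.2, hs'.1, hs'.2]
      calc Real.sqrt |s - s'| ≤ Real.sqrt ((δ n) ^ 2) := Real.sqrt_le_sqrt habs
        _ = δ n := Real.sqrt_sq (hδ0 n).le
    have hsj : (0:ℝ) ≤ Real.sqrt j := Real.sqrt_nonneg _
    apply max_le
    · calc ‖y - y'‖ ≤ Real.sqrt j * δ n := hnorm
        _ ≤ (Real.sqrt j + 1) * δ n := by nlinarith [(hδ0 n).le]
    · calc Real.sqrt |s - s'| ≤ δ n := htime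
        _ ≤ (Real.sqrt j + 1) * δ n := by nlinarith [(hδ0 n).le]
  -- covering property
  have hcover : ∀ n, P ⊆ ⋃ i, t n i := by
    intro n
    rintro X ⟨⟨y, s⟩, ⟨hy, hs⟩, rfl⟩
    rw [Metric.mem_closedBall, dist_zero_right] at hy
    rw [Set.mem_Icc] at hs
    -- choose spatial indices
    have hyk : ∀ k : Fin j, ∃ a : Fin (2 * (n + 1)),
        -K + (a : ℝ) * δ n ≤ y k ∧ y k ≤ -K + ((a : ℝ) + 1) * δ n := by
      intro k
      have hcoord : |y k| ≤ K := by
        have h1 : (y k) ^ 2 ≤ ∑ l, ‖y l‖ ^ 2 := by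
          have := Finset.single_le_sum (f := fun l => ‖y l‖ ^ 2)
            (fun l _ => by positivity) (Finset.mem_univ k)
          calc (y k) ^ 2 = ‖y k‖ ^ 2 := by rw [Real.norm_eq_abs, sq_abs]
            _ ≤ _ := this
        have h2 : |y k| = Real.sqrt ((y k) ^ 2) := (Real.sqrt_sq_eq_abs _).symm
        rw [h2]
        calc Real.sqrt ((y k) ^ 2) ≤ Real.sqrt (∑ l, ‖y l‖ ^ 2) := Real.sqrt_le_sqrt h1
          _ = ‖y‖ := (EuclideanSpace.norm_eq y).symm
          _ ≤ K := hy
      rw [abs_le] at hcoord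
      have := exists_cell (-K) (δ n) (hδ0 n) (2 * (n + 1)) (by omega) (y k)
        hcoord.1 (by
          have hcast : ((2 * (n + 1) : ℕ) : ℝ) = 2 * ((n : ℝ) + 1) := by push_cast; ring
          have hmul : ((2 * (n + 1) : ℕ) : ℝ) * δ n = 2 * K := by
            rw [hcast, hδ]; field_simp
          rw [hmul]; linarith [hcoord.2])
      exact this
    choose a ha using hyk
    -- choose time index
    have hstime : ∃ b : Fin (2 * (n + 1) ^ 2),
        -K + (b : ℝ) * (δ n) ^ 2 ≤ s ∧ s ≤ -K + ((b : ℝ) + 1) * (δ n) ^ 2 := by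
      apply exists_cell (-K) ((δ n) ^ 2) (by positivity) (2 * (n + 1) ^ 2) (by positivity) s hs.1
      have hcast2 : ((2 * (n + 1) ^ 2 : ℕ) : ℝ) = 2 * ((n : ℝ) + 1) ^ 2 := by push_cast; ring
      have hmul2 : ((2 * (n + 1) ^ 2 : ℕ) : ℝ) * (δ n) ^ 2 = 2 * K ^ 2 := by
        rw [hcast2, hδ]; field_simp
      rw [hmul2]
      nlinarith [hs.2, hK]
    obtain ⟨b, hb⟩ := hstime
    rw [Set.mem_iUnion]
    refine ⟨(a, b), (y, s), ⟨fun k => Set.mem_Icc.mpr (ha k), Set.mem_Icc.mpr hb⟩, rfl⟩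
  -- sum bound
  set A : ℝ≥0∞ := ENNReal.ofReal (2 ^ (j + 1) * c ^ (j + 2)) with hA
  have hsum : ∀ n : ℕ, ∑ i, EMetric.diam (t n i) ^ d ≤ A := by
    intro n
    have hcard : (Fintype.card ((Fin j → Fin (2 * (n + 1))) × Fin (2 * (n + 1) ^ 2))) =
        (2 * (n + 1)) ^ j * (2 * (n + 1) ^ 2) := by
      simp [Fintype.card_fun]
    calc ∑ i, EMetric.diam (t n i) ^ d
        ≤ ∑ _i : ((Fin j → Fin (2 * (n + 1))) × Fin (2 * (n + 1) ^ 2)), (r n) ^ d := by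
          apply Finset.sum_le_sum
          intro i _
          exact ENNReal.rpow_le_rpow (hdiam n i) (by positivity)
      _ = (Fintype.card ((Fin j → Fin (2 * (n + 1))) × Fin (2 * (n + 1) ^ 2)) : ℝ≥0∞) * (r n) ^ d := by
          rw [Finset.sum_const, Finset.card_univ, nsmul_eq_mul]
      _ ≤ A := by
          rw [hcard, hr]
          rw [ENNReal.ofReal_rpow_of_nonneg (by positivity) (by rw [hd]; positivity)]
          rw [show ((((2 * (n + 1)) ^ j * (2 * (n + 1) ^ 2) : ℕ)) : ℝ≥0∞)
            = ENNReal.ofReal (((2 * (n + 1)) ^ j * (2 * (n + 1) ^ 2) : ℕ) : ℝ) by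
              rw [ENNReal.ofReal_natCast]]
          rw [← ENNReal.ofReal_mul (by positivity)]
          apply ENNReal.ofReal_le_ofReal
          have hn1 : (0:ℝ) < (n : ℝ) + 1 := by positivity
          have hdiv : (c / ((n:ℝ) + 1)) ^ d = c ^ (j + 2) / ((n:ℝ) + 1) ^ (j + 2) := by
            rw [hd, show (j : ℝ) + 2 = ((j + 2 : ℕ) : ℝ) by push_cast; ring,
              Real.rpow_natCast, div_pow]
          rw [hdiv]
          push_cast
          apply le_of_eq
          have e1 : ((n:ℝ) + 1) ^ (j + 2) = ((n:ℝ) + 1) ^ j * ((n:ℝ) + 1) ^ 2 := pow_add _ j 2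
          rw [mul_pow, e1]
          have h2 : ((n:ℝ) + 1) ^ j ≠ 0 := by positivity
          have h3 : ((n:ℝ) + 1) ^ 2 ≠ 0 := by positivity
          field_simp
          ring
  -- conclude
  have hμH : μH[d] P ≤ A := by
    have := MeasureTheory.Measure.hausdorffMeasure_le_liminf_sum d P r hrtendsto t
      (Eventually.of_forall hdiam) (Eventually.of_forall hcover)
    refine this.trans ?_
    calc liminf (fun n => ∑ i, EMetric.diam (t n i) ^ d) atTop
        ≤ liminf (fun _n : ℕ => A) atTop := liminf_le_liminf (Eventually.of_forall hsum)
      _ = A := liminf_const A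
  have hne : μH[((((j : ℝ≥0) + 2 : ℝ≥0)) : ℝ)] P ≠ ⊤ := by
    rw [show ((((j : ℝ≥0) + 2 : ℝ≥0)) : ℝ) = d by push_cast; rw [hd]]
    exact (hμH.trans_lt (by rw [hA]; exact ENNReal.ofReal_lt_top)).ne
  have := dimH_le_of_hausdorffMeasure_ne_top hne
  refine this.trans (le_of_eq ?_)
  push_cast
  ring

/-- With respect to the parabolic metric on `ℝ^N × ℝ`, a `j`-dimensional linear
subspace `V ⊆ ℝ^N` at a fixed time `t₀` has Hausdorff dimension `j`, and the
spacetime track `V × ℝ` has Hausdorff dimension `j + 2`. -/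
theorem parabolic_dimH_subspace (N j : ℕ) (hN : 1 ≤ N) (hj : j ≤ N)
    (V : Submodule ℝ (EuclideanSpace ℝ (Fin N))) (hV : Module.finrank ℝ V = j) (t₀ : ℝ) :
    dimH {X : ParSpace N | X.1 ∈ V ∧ X.2 = t₀} = (j : ℝ≥0∞) ∧
    dimH {X : ParSpace N | X.1 ∈ V} = (j : ℝ≥0∞) + 2 := by
  classical
  let b : OrthonormalBasis (Fin j) ℝ V := (stdOrthonormalBasis ℝ V).reindex (finCongr hV)
  let L : EuclideanSpace ℝ (Fin j) →ₗᵢ[ℝ] EuclideanSpace ℝ (Fin N) :=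
    V.subtypeₗᵢ.comp b.repr.symm.toLinearIsometry
  have hL : ∀ y, L y = ((b.repr.symm y : V) : EuclideanSpace ℝ (Fin N)) := fun y => rfl
  have hrange : ∀ x : EuclideanSpace ℝ (Fin N), x ∈ V ↔ ∃ y, L y = x := by
    intro x
    constructor
    · intro hx
      refine ⟨b.repr ⟨x, hx⟩, ?_⟩
      rw [hL, LinearIsometryEquiv.symm_apply_apply]
    · rintro ⟨y, rfl⟩
      rw [hL]
      exact (b.repr.symm y).2
  constructor
  · have hset : {X : ParSpace N | X.1 ∈ V ∧ X.2 = t₀}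
        = (fun y : EuclideanSpace ℝ (Fin j) => parMap L (y, t₀)) '' Set.univ := by
      ext X
      simp only [Set.mem_setOf_eq, Set.image_univ, Set.mem_range]
      constructor
      · rintro ⟨hx, ht⟩
        obtain ⟨y, hy⟩ := (hrange X.1).mp hx
        exact ⟨y, by rw [← ht]; exact Prod.ext hy rfl⟩
      · rintro ⟨y, rfl⟩
        exact ⟨(hrange _).mpr ⟨y, rfl⟩, rfl⟩
    rw [hset, dimH_slice]
  · have hset2 : {X : ParSpace N | X.1 ∈ V} = Set.range (parMap L) := by
      ext X
      simp only [Set.mem_setOf_eq, Set.mem_range]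
      constructor
      · intro hx
        obtain ⟨y, hy⟩ := (hrange X.1).mp hx
        exact ⟨(y, X.2), Prod.ext hy rfl⟩
      · rintro ⟨p, rfl⟩
        exact (hrange _).mpr ⟨p.1, rfl⟩
    rw [hset2]
    refine le_antisymm ?_ (dimH_range_parMap_ge L)
    have hcover : Set.range (parMap L) ⊆ ⋃ k : ℕ, parMap L ''
        (Metric.closedBall (0 : EuclideanSpace ℝ (Fin j)) ((k : ℝ) + 1)
          ×ˢ Set.Icc (-((k : ℝ) + 1)) ((k : ℝ) + 1)) := by
      rintro X ⟨⟨y, t⟩, rfl⟩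
      rw [Set.mem_iUnion]
      refine ⟨⌈max ‖y‖ |t|⌉₊, (y, t), ⟨?_, ?_⟩, rfl⟩
      · rw [Metric.mem_closedBall, dist_zero_right]
        calc ‖y‖ ≤ max ‖y‖ |t| := le_max_left _ _
          _ ≤ (⌈max ‖y‖ |t|⌉₊ : ℝ) := Nat.le_ceil _
          _ ≤ (⌈max ‖y‖ |t|⌉₊ : ℝ) + 1 := by linarith
      · have habs : |t| ≤ (⌈max ‖y‖ |t|⌉₊ : ℝ) + 1 := by
          calc |t| ≤ max ‖y‖ |t| := le_max_right _ _
            _ ≤ (⌈max ‖y‖ |t|⌉₊ : ℝ) := Nat.le_ceil _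
            _ ≤ (⌈max ‖y‖ |t|⌉₊ : ℝ) + 1 := by linarith
        rw [abs_le] at habs
        exact Set.mem_Icc.mpr habs
    refine (dimH_mono hcover).trans ?_
    rw [dimH_iUnion]
    refine iSup_le fun k => dimH_piece_le L _ ?_
    have := Nat.cast_nonneg (α := ℝ) k
    linarith
end AuxLemmas4
end

section
/- (Two-point cone-splitting for measures.) Let μ be a Borel measure on ℝ^N, let n ≥ 0 be a real number, and let y ∈ ℝ^N with y ≠ 0. Suppose μ is homogeneous of degree n about 0 and also homogeneous of degree n about y. Then μ is invariant under translation by t·y for every t ∈ ℝ. -/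
open MeasureTheory

/-- `μ` is homogeneous of degree `n` about the point `y`:
`μ(y + λ(A − y)) = λ^n μ(A)` for every Borel set `A` and every `λ > 0`. -/
def HomogeneousAbout {N : ℕ} (μ : Measure (EuclideanSpace ℝ (Fin N))) (n : ℝ)
    (y : EuclideanSpace ℝ (Fin N)) : Prop :=
  ∀ A : Set (EuclideanSpace ℝ (Fin N)), MeasurableSet A → ∀ l : ℝ, 0 < l →
    μ ((fun x => y + l • (x - y)) '' A) = ENNReal.ofReal (l ^ n) * μ A

/-- `μ` is invariant under translation by the vector `w`. -/
def TranslationInvariantBy {N : ℕ} (μ : Measure (EuclideanSpace ℝ (Fin N)))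
    (w : EuclideanSpace ℝ (Fin N)) : Prop :=
  ∀ A : Set (EuclideanSpace ℝ (Fin N)), MeasurableSet A → μ ((fun x => x + w) '' A) = μ A

/-- Two-point cone-splitting: a Borel measure on `ℝ^N` that is homogeneous of
degree `n` about `0` and about a second point `y ≠ 0` is invariant under all
translations along the line `ℝ·y`. -/
theorem two_point_cone_splitting (N : ℕ) (μ : Measure (EuclideanSpace ℝ (Fin N)))
    (n : ℝ) (hn : 0 ≤ n) (y : EuclideanSpace ℝ (Fin N)) (hy : y ≠ 0)
    (h0 : HomogeneousAbout μ n 0) (hy' : HomogeneousAbout μ n y) :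
    ∀ t : ℝ, TranslationInvariantBy μ (t • y) := by
  -- Step 1: invariance under `s • y` for all `s < 1`.
  have key : ∀ s : ℝ, s < 1 → TranslationInvariantBy μ (s • y) := by
    intro s hs A hA
    have hl : (0:ℝ) < 1 - s := by linarith
    set l : ℝ := (1 - s)⁻¹ with hldef
    have hlpos : 0 < l := inv_pos.mpr hl
    have hB0 := h0 A hA l hlpos
    have hmap0 : (fun x : EuclideanSpace ℝ (Fin N) =>
        (0 : EuclideanSpace ℝ (Fin N)) + l • (x - 0)) = fun x => l • x := by
      funext x; simp
    rw [hmap0] at hB0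
    have hBeq : (fun x : EuclideanSpace ℝ (Fin N) => l • x) '' A
        = (fun x : EuclideanSpace ℝ (Fin N) => l⁻¹ • x) ⁻¹' A := by
      ext x
      simp only [Set.mem_image, Set.mem_preimage]
      constructor
      · rintro ⟨a, ha, rfl⟩
        simpa [smul_smul, inv_mul_cancel₀ (ne_of_gt hlpos)] using ha
      · intro hx
        exact ⟨l⁻¹ • x, hx, by simp [smul_smul, mul_inv_cancel₀ (ne_of_gt hlpos)]⟩
    have hBmeas : MeasurableSet ((fun x : EuclideanSpace ℝ (Fin N) => l • x) '' A) := by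
      rw [hBeq]
      exact hA.preimage (measurable_const_smul _)
    have h2 := hy' _ hBmeas l⁻¹ (inv_pos.mpr hlpos)
    rw [Set.image_image] at h2
    have hcomp : (fun x : EuclideanSpace ℝ (Fin N) => y + l⁻¹ • (l • x - y))
        = fun x => x + s • y := by
      funext x
      have hinv : l⁻¹ = 1 - s := by rw [hldef, inv_inv]
      have h1 : (1 - s) * l = 1 := mul_inv_cancel₀ (ne_of_gt hl)
      rw [hinv, smul_sub, smul_smul, h1, one_smul, sub_smul, one_smul]
      abel
    rw [hcomp] at h2
    rw [h2, hB0, ← mul_assoc, ← ENNReal.ofReal_mul (by positivity),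
      ← Real.mul_rpow (by positivity) (by positivity),
      inv_mul_cancel₀ (ne_of_gt hlpos), Real.one_rpow, ENNReal.ofReal_one, one_mul]
  -- Step 2: invariance is closed under negation of the vector.
  have neg : ∀ w : EuclideanSpace ℝ (Fin N),
      TranslationInvariantBy μ w → TranslationInvariantBy μ (-w) := by
    intro w h A hA
    have hA'eq : (fun x : EuclideanSpace ℝ (Fin N) => x + -w) '' A
        = (fun x : EuclideanSpace ℝ (Fin N) => x + w) ⁻¹' A := by
      ext x
      simp only [Set.mem_image, Set.mem_preimage]
      constructor
      · rintro ⟨a, ha, rfl⟩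
        simpa using ha
      · intro hx
        exact ⟨x + w, hx, by abel⟩
    have hA' : MeasurableSet ((fun x : EuclideanSpace ℝ (Fin N) => x + -w) '' A) := by
      rw [hA'eq]
      exact hA.preimage (measurable_id.add_const w)
    have h3 := h _ hA'
    rw [Set.image_image] at h3
    have hcomp : (fun x : EuclideanSpace ℝ (Fin N) => x + -w + w) = fun x => x := by
      funext x; abel
    rw [hcomp, Set.image_id'] at h3
    exact h3.symm
  intro t
  rcases lt_or_ge t 1 with ht | ht
  · exact key t ht
  · have := neg _ (key (-t) (by linarith))
    rwa [neg_smul, neg_neg] at this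
end

section
/- (Cone-splitting principle for varifolds, measure form.) Let μ be a Borel measure on ℝ^N, let n ≥ 0 be a real number, and let V ⊆ ℝ^N be a linear subspace. Suppose μ is homogeneous of degree n about 0, μ is invariant under translation by every vector of V, and there exists y ∉ V such that μ is homogeneous of degree n about y. Then μ is invariant under translation by every vector of the linear span of V ∪ {y}, and μ is homogeneous of degree n about every point of the linear span of V ∪ {y}. -/
open MeasureTheory

lemma dil_img_eq {N : ℕ} (y : EuclideanSpace ℝ (Fin N)) (l : ℝ) (hl : l ≠ 0)
    (A : Set (EuclideanSpace ℝ (Fin N))) :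
    (fun x => y + l • (x - y)) '' A = (fun x => y + l⁻¹ • (x - y)) ⁻¹' A := by
  refine congrFun (Set.image_eq_preimage_of_inverse ?_ ?_) A <;> intro x <;>
    simp [smul_smul, inv_mul_cancel₀ hl, mul_inv_cancel₀ hl]

lemma dil_meas {N : ℕ} (y : EuclideanSpace ℝ (Fin N)) (l : ℝ) :
    Measurable (fun x : EuclideanSpace ℝ (Fin N) => y + l • (x - y)) := by
  fun_prop

lemma dil_img_meas {N : ℕ} (y : EuclideanSpace ℝ (Fin N)) (l : ℝ) (hl : l ≠ 0)
    {A : Set (EuclideanSpace ℝ (Fin N))} (hA : MeasurableSet A) :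
    MeasurableSet ((fun x => y + l • (x - y)) '' A) := by
  rw [dil_img_eq y l hl A]
  exact (dil_meas y l⁻¹) hA

lemma tr_img_eq {N : ℕ} (w : EuclideanSpace ℝ (Fin N)) (A : Set (EuclideanSpace ℝ (Fin N))) :
    (fun x => x + w) '' A = (fun x => x - w) ⁻¹' A := by
  refine congrFun (Set.image_eq_preimage_of_inverse ?_ ?_) A <;> intro x <;> module

lemma tr_img_meas {N : ℕ} (w : EuclideanSpace ℝ (Fin N))
    {A : Set (EuclideanSpace ℝ (Fin N))} (hA : MeasurableSet A) :
    MeasurableSet ((fun x => x + w) '' A) := by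
  rw [tr_img_eq]
  exact (by fun_prop : Measurable fun x : EuclideanSpace ℝ (Fin N) => x - w) hA

lemma ti_add {N : ℕ} {μ : Measure (EuclideanSpace ℝ (Fin N))}
    {w₁ w₂ : EuclideanSpace ℝ (Fin N)} (h1 : TranslationInvariantBy μ w₁)
    (h2 : TranslationInvariantBy μ w₂) : TranslationInvariantBy μ (w₁ + w₂) := by
  intro A hA
  have key : (fun x => x + (w₁ + w₂)) '' A
      = (fun x => x + w₂) '' ((fun x => x + w₁) '' A) := by
    rw [Set.image_image]; simp [add_assoc]
  rw [key, h2 _ (tr_img_meas w₁ hA), h1 _ hA]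

lemma ti_neg {N : ℕ} {μ : Measure (EuclideanSpace ℝ (Fin N))}
    {w : EuclideanSpace ℝ (Fin N)} (h : TranslationInvariantBy μ w) :
    TranslationInvariantBy μ (-w) := by
  intro A hA
  have := h _ (tr_img_meas (-w) hA)
  rw [Set.image_image] at this
  simpa using this.symm

/-- Cone-splitting principle: if a Borel measure on `ℝ^N` is homogeneous of degree
`n` about `0`, invariant under translations by a subspace `V`, and homogeneous of
degree `n` about some point `y ∉ V`, then it is invariant under translations by
`span (V ∪ {y})` and homogeneous of degree `n` about every point of `span (V ∪ {y})`. -/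
theorem cone_splitting_for_measures (N : ℕ) (μ : Measure (EuclideanSpace ℝ (Fin N)))
    (n : ℝ) (hn : 0 ≤ n) (V : Submodule ℝ (EuclideanSpace ℝ (Fin N)))
    (y : EuclideanSpace ℝ (Fin N)) (hy : y ∉ V)
    (h0 : HomogeneousAbout μ n 0)
    (hV : ∀ w ∈ V, TranslationInvariantBy μ w)
    (hy' : HomogeneousAbout μ n y) :
    (∀ w ∈ Submodule.span ℝ (↑V ∪ {y} : Set (EuclideanSpace ℝ (Fin N))),
      TranslationInvariantBy μ w) ∧
    (∀ z ∈ Submodule.span ℝ (↑V ∪ {y} : Set (EuclideanSpace ℝ (Fin N))),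
      HomogeneousAbout μ n z) := by
  -- Step 1: translation invariance by t • y for t > -1
  have step1 : ∀ t : ℝ, -1 < t → TranslationInvariantBy μ (t • y) := by
    intro t ht A hA
    have h1t : (0:ℝ) < 1 + t := by linarith
    have hlpos : 0 < (1+t)⁻¹ := inv_pos.mpr h1t
    have key : (fun x => x + t • y) '' A
        = (fun x => (0 : EuclideanSpace ℝ (Fin N)) + (1+t) • (x - 0)) ''
          ((fun x => y + (1+t)⁻¹ • (x - y)) '' A) := by
      rw [Set.image_image]
      apply congrArg (· '' A); funext x
      simp only [sub_zero, zero_add, smul_add, smul_sub, smul_smul,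
        mul_inv_cancel₀ h1t.ne', one_smul]
      module
    rw [key, h0 _ (dil_img_meas y _ hlpos.ne' hA) _ h1t, hy' A hA _ hlpos,
      ← mul_assoc, ← ENNReal.ofReal_mul (Real.rpow_nonneg h1t.le n),
      ← Real.mul_rpow h1t.le hlpos.le, mul_inv_cancel₀ h1t.ne', Real.one_rpow,
      ENNReal.ofReal_one, one_mul]
  -- all scalar multiples of y
  have hall : ∀ c : ℝ, TranslationInvariantBy μ (c • y) := by
    intro c
    rcases lt_or_ge (-1) c with hc | hc
    · exact step1 c hc
    · have := ti_neg (step1 (-c) (by linarith))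
      simpa using this
  -- translation invariance on the span
  have hspan : ∀ w ∈ Submodule.span ℝ (↑V ∪ {y} : Set (EuclideanSpace ℝ (Fin N))),
      TranslationInvariantBy μ w := by
    intro w hw
    rw [Submodule.span_union, Submodule.span_eq] at hw
    obtain ⟨v, hv, u, hu, rfl⟩ := Submodule.mem_sup.mp hw
    obtain ⟨c, rfl⟩ := Submodule.mem_span_singleton.mp hu
    exact ti_add (hV v hv) (hall c)
  refine ⟨hspan, ?_⟩
  intro z hz A hA l hl
  have key : (fun x => z + l • (x - z)) '' A
      = (fun x => x + (1 - l) • z) ''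
        ((fun x => (0 : EuclideanSpace ℝ (Fin N)) + l • (x - 0)) '' A) := by
    rw [Set.image_image]
    apply congrArg (· '' A); funext x
    module
  rw [key, hspan _ (Submodule.smul_mem _ _ hz) _ ?_, h0 A hA l hl]
  have := dil_img_meas (0 : EuclideanSpace ℝ (Fin N)) l hl.ne' hA
  exact this
end
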